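/- Every countable group admits a left-invariant proper metric, i.e., a left-invariant metric in which every bounded set is finite. -/

import Mathlib

/-- `d` is a metric on `X` (given as an explicit distance function). -/
def IsMetricD {X : Type*} (d : X → X → ℝ) : Prop :=
  (∀ x y, 0 ≤ d x y) ∧ (∀ x y, d x y = 0 ↔ x = y) ∧ (∀ x y, d x y = d y x) ∧
    ∀ x y z, d x z ≤ d x y + d y z

/-- A set is bounded with respect to the distance function `d`. -/
def IsBoundedD {X : Type*} (d : X → X → ℝ) (B : Set X) : Prop :=
  ∃ C : ℝ, ∀ x ∈ B, ∀ y ∈ B, d x y ≤ C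

/-- `f` is bornologous with respect to the distance functions `dX`, `dY`. -/
def BornologousD {X Y : Type*} (dX : X → X → ℝ) (dY : Y → Y → ℝ) (f : X → Y) : Prop :=
  ∀ R > (0 : ℝ), ∃ S > (0 : ℝ), ∀ x y, dX x y < R → dY (f x) (f y) < S

/-- `f` is metrically proper: preimages of bounded sets are bounded. -/
def MetricallyProperD {X Y : Type*} (dX : X → X → ℝ) (dY : Y → Y → ℝ) (f : X → Y) : Prop :=
  ∀ B : Set Y, IsBoundedD dY B → IsBoundedD dX (f ⁻¹' B)

/-- A coarse map is bornologous and metrically proper. -/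
def CoarseMapD {X Y : Type*} (dX : X → X → ℝ) (dY : Y → Y → ℝ) (f : X → Y) : Prop :=
  BornologousD dX dY f ∧ MetricallyProperD dX dY f

/-- Two maps are close if pointwise distances are uniformly bounded. -/
def CloseD {X Y : Type*} (dY : Y → Y → ℝ) (f g : X → Y) : Prop :=
  ∃ C : ℝ, ∀ x, dY (f x) (g x) ≤ C

/-- `f` is a coarse equivalence: a coarse map with a coarse inverse up to closeness. -/
def CoarseEquivD {X Y : Type*} (dX : X → X → ℝ) (dY : Y → Y → ℝ) (f : X → Y) : Prop :=
  CoarseMapD dX dY f ∧ ∃ g : Y → X, CoarseMapD dY dX g ∧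
    CloseD dY (f ∘ g) id ∧ CloseD dX (g ∘ f) id

noncomputable section WordLen

variable {G : Type*} [Group G]

def lenSet (w : G → ℕ) (g : G) : Set ℕ :=
  {n | ∃ l : List G, l.prod = g ∧ (l.map w).sum = n}

lemma lenSet_nonempty (w : G → ℕ) (g : G) : (lenSet w g).Nonempty :=
  ⟨w g, [g], by simp, by simp⟩

noncomputable def len (w : G → ℕ) (g : G) : ℕ := sInf (lenSet w g)

lemma len_mem (w : G → ℕ) (g : G) :
    ∃ l : List G, l.prod = g ∧ (l.map w).sum = len w g :=
  Nat.sInf_mem (lenSet_nonempty w g)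

lemma len_le (w : G → ℕ) {g : G} {l : List G} (h : l.prod = g) :
    len w g ≤ (l.map w).sum :=
  Nat.sInf_le ⟨l, h, rfl⟩

lemma len_one (w : G → ℕ) : len w 1 = 0 :=
  Nat.le_zero.mp (by simpa using len_le w (l := []) (by simp))

lemma len_mul_le (w : G → ℕ) (g h : G) : len w (g * h) ≤ len w g + len w h := by
  obtain ⟨l1, hp1, hs1⟩ := len_mem w g
  obtain ⟨l2, hp2, hs2⟩ := len_mem w h
  calc len w (g * h) ≤ ((l1 ++ l2).map w).sum := len_le w (by simp [hp1, hp2])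
    _ = len w g + len w h := by simp [hs1, hs2]

lemma len_inv_le (w : G → ℕ) (hw : ∀ g : G, w g⁻¹ = w g) (g : G) :
    len w g⁻¹ ≤ len w g := by
  obtain ⟨l, hp, hs⟩ := len_mem w g
  have hprod : ((l.map fun x => x⁻¹).reverse).prod = g⁻¹ := by
    rw [← List.prod_inv_reverse, hp]
  calc len w g⁻¹ ≤ (((l.map fun x => x⁻¹).reverse).map w).sum := len_le w hprod
    _ = len w g := by
        rw [List.map_reverse, List.sum_reverse, List.map_map]
        have : w ∘ (fun x : G => x⁻¹) = w := funext hw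
        rw [this, hs]

lemma len_inv (w : G → ℕ) (hw : ∀ g : G, w g⁻¹ = w g) (g : G) :
    len w g⁻¹ = len w g :=
  le_antisymm (len_inv_le w hw g) (by simpa using len_inv_le w hw g⁻¹)

lemma len_eq_zero (w : G → ℕ) (hw0 : ∀ g : G, w g = 0 → g = 1) {g : G}
    (h : len w g = 0) : g = 1 := by
  obtain ⟨l, hp, hs⟩ := len_mem w g
  rw [h] at hs
  rw [← hp]
  apply List.prod_eq_one
  intro x hx
  apply hw0
  have := List.sum_eq_zero_iff.mp hs (w x) (List.mem_map_of_mem (f := w) hx)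
  exact this

lemma finite_prod_le {F : Set G} (hF : F.Finite) :
    ∀ n : ℕ, {g : G | ∃ l : List G, l.prod = g ∧ (∀ x ∈ l, x ∈ F) ∧ l.length ≤ n}.Finite := by
  intro n
  induction n with
  | zero =>
    apply Set.Finite.subset (Set.finite_singleton (1 : G))
    rintro g ⟨l, hp, -, hlen⟩
    have : l = [] := List.length_eq_zero_iff.mp (Nat.le_zero.mp hlen)
    simp [this] at hp
    simp [← hp]
  | succ n ih =>
    apply Set.Finite.subset ((Set.finite_singleton (1 : G)).union (hF.image2 (· * ·) ih))
    rintro g ⟨l, hp, hmem, hlen⟩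
    match l with
    | [] => left; simp [← hp]
    | a :: t =>
      right
      have ht : t.prod ∈ {g : G | ∃ l : List G, l.prod = g ∧ (∀ x ∈ l, x ∈ F) ∧ l.length ≤ n} :=
        ⟨t, rfl, fun x hx => hmem x (by simp [hx]), by simpa using Nat.succ_le_succ_iff.mp hlen⟩
      have : g ∈ Set.image2 (· * ·) F {g : G | ∃ l : List G, l.prod = g ∧ (∀ x ∈ l, x ∈ F) ∧ l.length ≤ n} := by
        rw [← hp, List.prod_cons]
        exact Set.mem_image2_of_mem (hmem a (by simp)) ht
      exact this

lemma remove_ones (w : G → ℕ) : ∀ l : List G, ∃ l' : List G,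
    l'.prod = l.prod ∧ (l'.map w).sum ≤ (l.map w).sum ∧ ∀ x ∈ l', x ≠ 1 := by
  intro l
  induction l with
  | nil => exact ⟨[], rfl, le_rfl, by simp⟩
  | cons a t ih =>
    obtain ⟨l', hp, hs, hne⟩ := ih
    by_cases ha : a = 1
    · exact ⟨l', by simp [hp, ha], by simp; omega, hne⟩
    · refine ⟨a :: l', by simp [hp], by simp [hs], ?_⟩
      intro x hx
      rcases List.mem_cons.mp hx with h | h
      · simpa [h] using ha
      · exact hne x h

omit [Group G] in
lemma length_le_sum (w : G → ℕ) (l : List G) (h : ∀ x ∈ l, 1 ≤ w x) :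
    l.length ≤ (l.map w).sum := by
  induction l with
  | nil => simp
  | cons a t ih =>
    simp only [List.length_cons, List.map_cons, List.sum_cons]
    have h1 : 1 ≤ w a := h a (by simp)
    have h2 := ih fun x hx => h x (by simp [hx])
    omega

lemma finite_len_le (w : G → ℕ) (hw1 : ∀ g : G, g ≠ 1 → 1 ≤ w g)
    (hfin : ∀ N : ℕ, {h : G | w h ≤ N}.Finite) (N : ℕ) :
    {g : G | len w g ≤ N}.Finite := by
  apply Set.Finite.subset (finite_prod_le (hfin N) N)
  intro g hg
  obtain ⟨l, hp, hs⟩ := len_mem w g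
  obtain ⟨l', hp', hs', hne⟩ := remove_ones w l
  have hsum : (l'.map w).sum ≤ N := le_trans hs' (by rw [hs]; exact hg)
  refine ⟨l', by rw [hp', hp], fun x hx => ?_, ?_⟩
  · exact le_trans (List.single_le_sum (fun n _ => Nat.zero_le n) _ (List.mem_map_of_mem (f := w) hx)) hsum
  · exact le_trans (length_le_sum w l' fun x hx => hw1 x (hne x hx)) hsum

end WordLen

/-- Every countable group admits a left-invariant proper metric. -/
theorem stmt4 {G : Type*} [Group G] [Countable G] :
    ∃ d : G → G → ℝ, IsMetricD d ∧ (∀ g x y : G, d (g * x) (g * y) = d x y) ∧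
      ∀ B : Set G, IsBoundedD d B → B.Finite := by
  classical
  obtain ⟨e, he⟩ := Countable.exists_injective_nat G
  set w : G → ℕ := fun g => if g = 1 then 0 else max (e g) (e g⁻¹) + 1 with hw
  have hwsymm : ∀ g : G, w g⁻¹ = w g := by
    intro g
    by_cases hg : g = 1 <;> simp [hw, hg, inv_eq_one, max_comm]
  have hw0 : ∀ g : G, w g = 0 → g = 1 := by
    intro g hg
    by_contra h
    simp [hw, h] at hg
  have hw1 : ∀ g : G, g ≠ 1 → 1 ≤ w g := by
    intro g hg
    simp [hw, hg]
  have hfin : ∀ N : ℕ, {h : G | w h ≤ N}.Finite := by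
    intro N
    apply Set.Finite.subset ((Set.finite_singleton (1 : G)).union
      (Set.Finite.preimage he.injOn (Set.finite_Iic N)))
    intro h hh
    by_cases h1 : h = 1
    · left; simp [h1]
    · right
      have hh' : max (e h) (e h⁻¹) + 1 ≤ N := by
        rw [hw] at hh; simpa [h1] using hh
      simp only [Set.mem_preimage, Set.mem_Iic]
      have := le_max_left (e h) (e h⁻¹)
      omega
  refine ⟨fun x y => (len w (x⁻¹ * y) : ℝ), ⟨?_, ?_, ?_, ?_⟩, ?_, ?_⟩
  · intro x y; positivity
  · intro x y
    rw [Nat.cast_eq_zero]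
    constructor
    · intro h
      exact inv_mul_eq_one.mp (len_eq_zero w hw0 h)
    · rintro rfl; simp [len_one]
  · intro x y
    have : y⁻¹ * x = (x⁻¹ * y)⁻¹ := by group
    show ((len w (x⁻¹ * y) : ℕ) : ℝ) = ((len w (y⁻¹ * x) : ℕ) : ℝ)
    rw [this, len_inv w hwsymm]
  · intro x y z
    show ((len w (x⁻¹ * z) : ℕ) : ℝ) ≤ ((len w (x⁻¹ * y) : ℕ) : ℝ) + ((len w (y⁻¹ * z) : ℕ) : ℝ)
    rw [← Nat.cast_add, Nat.cast_le]
    have : x⁻¹ * z = (x⁻¹ * y) * (y⁻¹ * z) := by group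
    rw [this]
    exact len_mul_le w _ _
  · intro g x y
    show ((len w ((g * x)⁻¹ * (g * y)) : ℕ) : ℝ) = ((len w (x⁻¹ * y) : ℕ) : ℝ)
    have : (g * x)⁻¹ * (g * y) = x⁻¹ * y := by group
    rw [this]
  · rintro B ⟨C, hC⟩
    rcases B.eq_empty_or_nonempty with h | ⟨b, hb⟩
    · simp [h]
    · apply Set.Finite.subset
        ((finite_len_le w hw1 hfin ⌊C⌋₊).image fun h => b * h)
      intro x hx
      refine ⟨b⁻¹ * x, ?_, by group⟩
      exact Nat.le_floor (hC b hb x hx)
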